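/- The set of solutions (p2, p3, p4, p5, p6, p10, p12, p41, p43, p45, p119) ∈ ℚ^11 with all coordinates nonzero of the system p41 = p10^3·p12, p43 = p10^2·p12^2, p45 = p10·p12^3, p119 = p41·p43·p10^2·p12^3, p119 = p10^12, p119 = p12^10, p119 = p2^60, p119 = p3^40, p119 = p4^30, p119 = p5^20, p119 = p6^20 forms, under componentwise multiplication, a group of order exactly 64 in which every element squares to the identity; hence it is isomorphic to (ℤ/2ℤ)^6. -/

import Mathlib

namespace Stmt9Aux

def ε (a : ZMod 2) : ℚˣ := if a = 0 then 1 else -1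

lemma ε_add : ∀ a b : ZMod 2, ε (a + b) = ε a * ε b := by
  intro a b; fin_cases a <;> fin_cases b <;>
    simp +decide [ε, Units.ext_iff]

lemma ε_inj : Function.Injective ε := by
  intro a b h; fin_cases a <;> fin_cases b <;> simp +decide [ε, Units.ext_iff] at h ⊢ <;> rfl

lemma ε_cases : ∀ a : ZMod 2, ε a = 1 ∨ ε a = -1 := by
  intro a; fin_cases a <;> simp +decide [ε]

lemma ε_pow_even : ∀ (x : ZMod 2) (n : ℕ), ε x ^ (2 * n) = 1 := by
  intro x n
  rcases ε_cases x with h | h <;> rw [h, pow_mul]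
  · rw [one_pow, one_pow]
  · rw [neg_one_sq, one_pow]

def Φ (w : Fin 6 → ZMod 2) : Fin 11 → ℚˣ
  | 0 => ε (w 0)
  | 1 => ε (w 1)
  | 2 => ε (w 2)
  | 3 => ε (w 3)
  | 4 => ε (w 4)
  | 5 => 1
  | 6 => ε (w 5)
  | 7 => ε (w 5)
  | 8 => 1
  | 9 => ε (w 5)
  | 10 => 1

def W (a0 a1 a2 a3 a4 a6 : ZMod 2) : Fin 6 → ZMod 2
  | 0 => a0
  | 1 => a1
  | 2 => a2
  | 3 => a3
  | 4 => a4
  | 5 => a6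

def φ : Multiplicative (Fin 6 → ZMod 2) →* (Fin 11 → ℚˣ) where
  toFun v := Φ v.toAdd
  map_one' := by funext i; fin_cases i <;> simp [Φ, ε]
  map_mul' v w := by
    funext i
    fin_cases i <;> simp [Φ, ε_add]

lemma φ_inj : Function.Injective φ := by
  intro v w h
  have h' : ∀ i, Φ v.toAdd i = Φ w.toAdd i := fun i => congrFun h i
  have : v.toAdd = w.toAdd := by
    funext j
    fin_cases j
    · exact ε_inj (h' 0)
    · exact ε_inj (h' 1)
    · exact ε_inj (h' 2)
    · exact ε_inj (h' 3)
    · exact ε_inj (h' 4)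
    · exact ε_inj (h' 6)
  exact Multiplicative.toAdd.injective this

lemma units_pm {u : ℚˣ} {n : ℕ} (hn : n ≠ 0) (h : u ^ n = 1) : u = 1 ∨ u = -1 := by
  have hc : (u : ℚ) ^ n = 1 := by
    have := congrArg Units.val h
    push_cast at this
    exact this
  have habs : |(u : ℚ)| = 1 := by
    have h1 : |(u : ℚ)| ^ n = 1 := by rw [← abs_pow, hc, abs_one]
    by_contra hne
    rcases lt_or_gt_of_ne hne with hlt | hgt
    · have := pow_lt_one₀ (abs_nonneg _) hlt hn
      rw [h1] at this; exact lt_irrefl _ this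
    · have := one_lt_pow₀ hgt hn
      rw [h1] at this; exact lt_irrefl _ this
  rcases (abs_eq (by norm_num : (0:ℚ) ≤ 1)).mp habs with h' | h'
  · left; ext; simpa using h'
  · right; ext; simpa using h'

lemma solve {p : Fin 11 → ℚˣ}
    (h1 : p 7 = p 5 ^ 3 * p 6) (h2 : p 8 = p 5 ^ 2 * p 6 ^ 2)
    (h4 : p 10 = p 7 * p 8 * p 5 ^ 2 * p 6 ^ 3) (h5 : p 10 = p 5 ^ 12) (h6 : p 10 = p 6 ^ 10) :
    p 5 = 1 ∧ p 6 ^ 2 = 1 := by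
  set a : ℚ := (p 5 : ℚ) with ha'
  set b : ℚ := (p 6 : ℚ) with hb'
  have ha : a ≠ 0 := Units.ne_zero _
  have hb : b ≠ 0 := Units.ne_zero _
  have h45 : p 5 ^ 12 = (p 5 ^ 3 * p 6) * (p 5 ^ 2 * p 6 ^ 2) * p 5 ^ 2 * p 6 ^ 3 := by
    rw [← h5, h4, h1, h2]
  have e1 : a ^ 12 = (a ^ 3 * b) * (a ^ 2 * b ^ 2) * a ^ 2 * b ^ 3 := by
    have := congrArg Units.val h45; push_cast at this; exact this
  have h56 : p 5 ^ 12 = p 6 ^ 10 := by rw [← h5, h6]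
  have e2 : a ^ 12 = b ^ 10 := by
    have := congrArg Units.val h56; push_cast at this; exact this
  have k5 : a ^ 5 = b ^ 6 := by
    have h7 : a ^ 7 ≠ 0 := pow_ne_zero _ ha
    apply mul_left_cancel₀ h7
    calc a ^ 7 * a ^ 5 = a ^ 12 := by ring
      _ = (a ^ 3 * b) * (a ^ 2 * b ^ 2) * a ^ 2 * b ^ 3 := e1
      _ = a ^ 7 * b ^ 6 := by ring
  have k22 : b ^ 22 = 1 := by
    have h50 : b ^ 50 ≠ 0 := pow_ne_zero _ hb
    apply mul_left_cancel₀ h50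
    calc b ^ 50 * b ^ 22 = (b ^ 6) ^ 12 := by ring
      _ = (a ^ 5) ^ 12 := by rw [k5]
      _ = (a ^ 12) ^ 5 := by ring
      _ = (b ^ 10) ^ 5 := by rw [e2]
      _ = b ^ 50 * 1 := by ring
  have k22u : p 6 ^ 22 = 1 := by ext; push_cast; exact k22
  have hb2 : p 6 ^ 2 = 1 := by
    rcases units_pm (by norm_num) k22u with h | h <;> rw [h] <;> norm_num
  have hb2c : b ^ 2 = 1 := by
    have := congrArg Units.val hb2; push_cast at this; exact this
  have k55 : a ^ 5 = 1 := by
    calc a ^ 5 = b ^ 6 := k5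
      _ = (b ^ 2) ^ 3 := by ring
      _ = 1 := by rw [hb2c]; norm_num
  have k55u : p 5 ^ 5 = 1 := by ext; push_cast; exact k55
  have hp5 : p 5 = 1 := by
    rcases units_pm (by norm_num) k55u with h | h
    · exact h
    · exfalso
      have : a = -1 := by
        have := congrArg Units.val h; push_cast at this; exact this
      rw [this] at k55; norm_num at k55
  exact ⟨hp5, hb2⟩

end Stmt9Aux

set_option maxHeartbeats 1000000 in
open Stmt9Aux in
/-- Remark 3.3, algebra (ΛU₄, δ₄): nonzero solutions (tuples `Fin 11 → ℚˣ`,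
coordinates `p 0 = p2`, `p 1 = p3`, `p 2 = p4`, `p 3 = p5`, `p 4 = p6`, `p 5 = p10`, `p 6 = p12`, `p 7 = p41`, `p 8 = p43`, `p 9 = p45`, `p 10 = p119`)
form a group of order 64 under componentwise multiplication in which every
element squares to the identity; hence it is isomorphic to (ℤ/2ℤ)^6. -/
theorem stmt_9 :
    ∃ H : Subgroup (Fin 11 → ℚˣ),
      (H : Set (Fin 11 → ℚˣ)) =
        {p : Fin 11 → ℚˣ | p 7 = p 5 ^ 3 * p 6 ∧
        p 8 = p 5 ^ 2 * p 6 ^ 2 ∧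
        p 9 = p 5 * p 6 ^ 3 ∧
        p 10 = p 7 * p 8 * p 5 ^ 2 * p 6 ^ 3 ∧
        p 10 = p 5 ^ 12 ∧
        p 10 = p 6 ^ 10 ∧
        p 10 = p 0 ^ 60 ∧
        p 10 = p 1 ^ 40 ∧
        p 10 = p 2 ^ 30 ∧
        p 10 = p 3 ^ 20 ∧
        p 10 = p 4 ^ 20} ∧
      Nat.card H = 64 ∧
      (∀ x ∈ H, x * x = 1) ∧
      Nonempty (H ≃* Multiplicative (Fin 6 → ZMod 2)) := by
  have equ := MonoidHom.ofInjective φ_inj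
  refine ⟨φ.range, ?_, ?_, ?_, ⟨equ.symm⟩⟩
  · ext p
    simp only [MonoidHom.coe_range, Set.mem_range, Set.mem_setOf_eq]
    constructor
    · rintro ⟨v, rfl⟩
      have hv : φ v = Φ v.toAdd := rfl
      rw [hv]
      refine ⟨?_, ?_, ?_, ?_, ?_, ?_, (ε_pow_even _ 30).symm, (ε_pow_even _ 20).symm,
        (ε_pow_even _ 15).symm, (ε_pow_even _ 10).symm, (ε_pow_even _ 10).symm⟩ <;>
        simp only [Φ] <;>
        rcases ε_cases (v.toAdd 5) with h | h <;>
        (try rw [h]) <;> rw [Units.ext_iff] <;> push_cast <;> norm_num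
    · rintro ⟨h1, h2, h3, h4, h5, h6, h7, h8, h9, h10, h11⟩
      obtain ⟨hp5, hp62⟩ := solve h1 h2 h4 h5 h6
      have hp10 : p 10 = 1 := by rw [h5, hp5, one_pow]
      have c0 : p 0 = 1 ∨ p 0 = -1 := units_pm (n := 60) (by norm_num) (by rw [← h7, hp10])
      have c1 : p 1 = 1 ∨ p 1 = -1 := units_pm (n := 40) (by norm_num) (by rw [← h8, hp10])
      have c2 : p 2 = 1 ∨ p 2 = -1 := units_pm (n := 30) (by norm_num) (by rw [← h9, hp10])
      have c3 : p 3 = 1 ∨ p 3 = -1 := units_pm (n := 20) (by norm_num) (by rw [← h10, hp10])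
      have c4 : p 4 = 1 ∨ p 4 = -1 := units_pm (n := 20) (by norm_num) (by rw [← h11, hp10])
      have c6 : p 6 = 1 ∨ p 6 = -1 := units_pm (n := 2) (by norm_num) hp62
      have hp7 : p 7 = p 6 := by rw [h1, hp5, one_pow, one_mul]
      have hp8 : p 8 = 1 := by rw [h2, hp5, one_pow, one_mul, hp62]
      have hp9 : p 9 = p 6 := by
        rw [h3, hp5, one_mul, pow_succ, hp62, one_mul]
      have pick : ∀ u : ℚˣ, u = 1 ∨ u = -1 → ∃ x : ZMod 2, ε x = u := by
        rintro u (rfl | rfl)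
        · exact ⟨0, rfl⟩
        · exact ⟨1, by simp [ε]⟩
      obtain ⟨a0, ha0⟩ := pick _ c0
      obtain ⟨a1, ha1⟩ := pick _ c1
      obtain ⟨a2, ha2⟩ := pick _ c2
      obtain ⟨a3, ha3⟩ := pick _ c3
      obtain ⟨a4, ha4⟩ := pick _ c4
      obtain ⟨a6, ha6⟩ := pick _ c6
      refine ⟨Multiplicative.ofAdd (W a0 a1 a2 a3 a4 a6), ?_⟩
      have hw : φ (Multiplicative.ofAdd (W a0 a1 a2 a3 a4 a6)) = Φ (W a0 a1 a2 a3 a4 a6) :=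
        rfl
      rw [hw]
      funext i
      fin_cases i <;> simp only [Φ, W]
      · exact ha0
      · exact ha1
      · exact ha2
      · exact ha3
      · exact ha4
      · exact hp5.symm
      · exact ha6
      · exact ha6.trans hp7.symm
      · exact hp8.symm
      · exact ha6.trans hp9.symm
      · exact hp10.symm
  · rw [Nat.card_congr equ.toEquiv.symm]
    simp only [Nat.card_eq_fintype_card]
    simp [Fintype.card_fun]
  · rintro x ⟨v, rfl⟩
    rw [← map_mul]
    have hv : v * v = 1 := Multiplicative.toAdd.injective (by
      show v.toAdd + v.toAdd = 0
      funext i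
      exact CharTwo.add_self_eq_zero _)
    rw [hv, map_one]
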